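/- Let (G,Λ,φ) be a self-similar k-graph and I an ideal of EP_R(G,Λ). Then H_I := {v ∈ Λ^0 : s_v ∈ I} is a G-saturated G-hereditary subset of Λ^0. -/
import Mathlib


/-- A row-finite `k`-graph without sources: a small category with vertices `V`,
paths `P`, range `r`, source `s`, degree functor `d : P → ℕ^k`, and the
unique factorization property. Composition `comp` is total, but only meaningful
on composable pairs (`s μ = r ν`). -/
structure KGraph (k : ℕ) where
  V : Type
  P : Type
  r : P → V
  s : P → V
  vtx : V → P
  comp : P → P → P
  d : P → Fin k → ℕ
  r_vtx : ∀ v, r (vtx v) = v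
  s_vtx : ∀ v, s (vtx v) = v
  d_vtx : ∀ v, d (vtx v) = 0
  r_comp : ∀ μ ν, s μ = r ν → r (comp μ ν) = r μ
  s_comp : ∀ μ ν, s μ = r ν → s (comp μ ν) = s ν
  d_comp : ∀ μ ν, s μ = r ν → d (comp μ ν) = d μ + d ν
  comp_assoc : ∀ μ ν ξ, s μ = r ν → s ν = r ξ →
    comp (comp μ ν) ξ = comp μ (comp ν ξ)
  vtx_comp : ∀ μ, comp (vtx (r μ)) μ = μ
  comp_vtx : ∀ μ, comp μ (vtx (s μ)) = μ
  factor : ∀ (μ : P) (m n : Fin k → ℕ), d μ = m + n →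
    ∃! p : P × P, s p.1 = r p.2 ∧ comp p.1 p.2 = μ ∧ d p.1 = m ∧ d p.2 = n
  rowFinite : ∀ (v : V) (n : Fin k → ℕ), {μ | r μ = v ∧ d μ = n}.Finite
  noSources : ∀ (v : V) (n : Fin k → ℕ), ∃ μ, r μ = v ∧ d μ = n

/-- A self-similar `k`-graph `(G, Λ, φ)`: the group `G` acts on the `k`-graph by
degree-preserving automorphisms, and `φ : G × Λ → G` is a `1`-cocycle satisfying
the Exel–Pardo/Li–Yang axioms. -/
structure SelfSimilarKGraph (k : ℕ) (G : Type) [Group G] extends KGraph k where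
  actV : G → V → V
  actP : G → P → P
  φ : G → P → G
  actV_one : ∀ v, actV 1 v = v
  actV_mul : ∀ g h v, actV (g * h) v = actV g (actV h v)
  actP_one : ∀ μ, actP 1 μ = μ
  actP_mul : ∀ g h μ, actP (g * h) μ = actP g (actP h μ)
  actP_d : ∀ g μ, d (actP g μ) = d μ
  actP_r : ∀ g μ, r (actP g μ) = actV g (r μ)
  actP_s : ∀ g μ, s (actP g μ) = actV g (s μ)
  actP_vtx : ∀ g v, actP g (vtx v) = vtx (actV g v)
  cocycle : ∀ g h μ, φ (g * h) μ = φ g (actP h μ) * φ h μ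
  selfsim : ∀ g μ ν, s μ = r ν → actP g (comp μ ν) = comp (actP g μ) (actP (φ g μ) ν)
  φ_comp : ∀ g μ ν, s μ = r ν → φ g (comp μ ν) = φ (φ g μ) ν
  φ_vtx : ∀ g v, φ g (vtx v) = g

/-- An Exel–Pardo `(G,Λ)`-family in a `*`-algebra `A`: a Kumjian–Pask `Λ`-family
`{s_μ}` together with elements `{u_{v,g}}` satisfying the Exel–Pardo relations. -/
structure EPFamily {k : ℕ} {G : Type} [Group G] (SS : SelfSimilarKGraph k G)
    (A : Type) [Ring A] [StarRing A] where
  S : SS.P → A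
  U : SS.V → G → A
  /-- (KP1) vertex projections are idempotent -/
  proj : ∀ v, S (SS.vtx v) * S (SS.vtx v) = S (SS.vtx v)
  /-- (KP1) vertex projections are self-adjoint -/
  proj_star : ∀ v, star (S (SS.vtx v)) = S (SS.vtx v)
  /-- (KP1) vertex projections are pairwise orthogonal -/
  orth : ∀ v w, v ≠ w → S (SS.vtx v) * S (SS.vtx w) = 0
  /-- (KP2) `s_{μν} = s_μ s_ν` -/
  comp_eq : ∀ μ ν, SS.s μ = SS.r ν → S (SS.comp μ ν) = S μ * S ν
  /-- (KP3) `s_μ* s_μ = s_{s(μ)}` -/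
  star_self : ∀ μ, star (S μ) * S μ = S (SS.vtx (SS.s μ))
  /-- (KP4) `s_v = ∑_{μ ∈ vΛⁿ} s_μ s_μ*` -/
  ck : ∀ (v : SS.V) (n : Fin k → ℕ),
    S (SS.vtx v) = ∑ μ ∈ (SS.rowFinite v n).toFinset, S μ * star (S μ)
  /-- (2) `u_{v,e} = s_v` -/
  u_one : ∀ v, U v 1 = S (SS.vtx v)
  /-- (3) `u_{v,g}* = u_{g⁻¹·v,g⁻¹}` -/
  u_star : ∀ v g, star (U v g) = U (SS.actV g⁻¹ v) g⁻¹
  /-- (4) `u_{v,g} s_μ = δ_{v,g·r(μ)} s_{g·μ} u_{g·s(μ),φ(g,μ)}` (case `v = g·r(μ)`) -/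
  u_s_eq : ∀ v g μ, v = SS.actV g (SS.r μ) →
    U v g * S μ = S (SS.actP g μ) * U (SS.actV g (SS.s μ)) (SS.φ g μ)
  /-- (4) (case `v ≠ g·r(μ)`) -/
  u_s_ne : ∀ v g μ, v ≠ SS.actV g (SS.r μ) → U v g * S μ = 0
  /-- (5) `u_{v,g} u_{w,h} = δ_{v,g·w} u_{v,gh}` (case `v = g·w`) -/
  u_u_eq : ∀ v w g h, v = SS.actV g w → U v g * U w h = U v (g * h)
  /-- (5) (case `v ≠ g·w`) -/
  u_u_ne : ∀ v w g h, v ≠ SS.actV g w → U v g * U w h = 0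
/-- `H ⊆ Λ⁰` is `G`-hereditary if `r(μ) ∈ H` implies `g·s(μ) ∈ H`. -/
def GHereditary {k : ℕ} {G : Type} [Group G] (SS : SelfSimilarKGraph k G)
    (H : Set SS.V) : Prop :=
  ∀ (g : G) (μ : SS.P), SS.r μ ∈ H → SS.actV g (SS.s μ) ∈ H

/-- `H ⊆ Λ⁰` is `G`-saturated if `s(vΛⁿ) ⊆ H` for some `n` implies `v ∈ H`. -/
def GSaturated {k : ℕ} {G : Type} [Group G] (SS : SelfSimilarKGraph k G)
    (H : Set SS.V) : Prop :=
  ∀ (v : SS.V) (n : Fin k → ℕ),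
    (∀ μ : SS.P, SS.r μ = v → SS.d μ = n → SS.s μ ∈ H) → v ∈ H

/-- If `I` is a (two-sided, self-adjoint) ideal of `EP_R(G,Λ)`,
then `H_I = {v ∈ Λ⁰ : s_v ∈ I}` is a `G`-saturated `G`-hereditary subset of `Λ⁰`. -/
theorem ideal_vertex_set_saturated_hereditary {k : ℕ} {G : Type} [Group G]
    (SS : SelfSimilarKGraph k G) (R : Type) [CommRing R] [StarRing R]
    {A : Type} [Ring A] [StarRing A] [Algebra R A] [StarModule R A]
    (F : EPFamily SS A) (I : Submodule R A)
    (hmul_left : ∀ a ∈ I, ∀ b : A, b * a ∈ I)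
    (hmul_right : ∀ a ∈ I, ∀ b : A, a * b ∈ I)
    (hstar : ∀ a ∈ I, star a ∈ I) :
    GHereditary SS {v | F.S (SS.vtx v) ∈ I} ∧
    GSaturated SS {v | F.S (SS.vtx v) ∈ I} := by
  constructor
  · -- G-hereditary
    intro g μ hμ
    simp only [Set.mem_setOf_eq] at hμ ⊢
    set v := SS.s μ with hv
    -- step 1: s_{s(μ)} ∈ I
    have h1 : F.S μ = F.S (SS.vtx (SS.r μ)) * F.S μ := by
      conv_lhs => rw [← SS.vtx_comp μ]
      exact F.comp_eq _ _ (SS.s_vtx _)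
    have h2 : star (F.S μ) * F.S (SS.vtx (SS.r μ)) * F.S μ = F.S (SS.vtx v) := by
      rw [mul_assoc, ← h1, F.star_self]
    have hsv : F.S (SS.vtx v) ∈ I := by
      rw [← h2]
      exact hmul_right _ (hmul_left _ hμ _) _
    -- step 2: twist by u's
    have e1 : F.U (SS.actV g v) g * F.S (SS.vtx v)
        = F.S (SS.vtx (SS.actV g v)) * F.U (SS.actV g v) g := by
      have := F.u_s_eq (SS.actV g v) g (SS.vtx v) (by rw [SS.r_vtx])
      rw [this, SS.actP_vtx, SS.s_vtx, SS.φ_vtx]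
    have e2 : F.U (SS.actV g v) g * F.U v g⁻¹ = F.S (SS.vtx (SS.actV g v)) := by
      rw [F.u_u_eq _ _ _ _ rfl,
        mul_inv_cancel, F.u_one]
    have key : F.U (SS.actV g v) g * F.S (SS.vtx v) * F.U v g⁻¹
        = F.S (SS.vtx (SS.actV g v)) := by
      rw [e1, mul_assoc, e2, F.proj]
    rw [← key]
    exact hmul_right _ (hmul_left _ hsv _) _
  · -- G-saturated
    intro v n h
    simp only [Set.mem_setOf_eq] at h ⊢
    rw [F.ck v n]
    apply Submodule.sum_mem
    intro μ hμ
    rw [Set.Finite.mem_toFinset] at hμ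
    obtain ⟨hr, hd⟩ := hμ
    have hs : F.S (SS.vtx (SS.s μ)) ∈ I := h μ hr hd
    have h1 : F.S μ = F.S μ * F.S (SS.vtx (SS.s μ)) := by
      conv_lhs => rw [← SS.comp_vtx μ]
      exact F.comp_eq _ _ (SS.r_vtx _).symm
    have : F.S μ * star (F.S μ)
        = F.S μ * F.S (SS.vtx (SS.s μ)) * star (F.S μ) := by rw [← h1]
    rw [this]
    exact hmul_right _ (hmul_left _ hs _) _
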